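/- arXiv:2110.10587 — 7 statements merged into one kernel-verified Lean document; each statement's English description precedes it below -/
import Mathlib

section
/- If μ is a pointwise restriction and χ is any restriction, then the composite μχ (defined by G_{μχ} := (G_μ)_χ) is a restriction. -/
/-- A restriction on finite graphs: `χ G ⊆ G` and `χ G ⊆ H ⊆ G → χ H = χ G`. -/
def IsRestriction {S : Type*} [DecidableEq S] (χ : Finset S → Finset S) : Prop :=
  (∀ G : Finset S, χ G ⊆ G) ∧ ∀ G H : Finset S, χ G ⊆ H → H ⊆ G → χ H = χ G

/-- A pointwise function: it acts independently on each element. -/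
def IsPointwise {S : Type*} [DecidableEq S] (μ : Finset S → Finset S) : Prop :=
  (∀ s : S, μ {s} ⊆ {s}) ∧ ∀ G : Finset S, μ G = G.biUnion (fun s => μ {s})

/-- If `μ` is a pointwise restriction and `χ` any restriction, the composite
`μχ` (i.e. `G ↦ (G_μ)_χ`) is a restriction. -/
theorem pointwise_comp_isRestriction {S : Type*} [DecidableEq S]
    (μ χ : Finset S → Finset S) (hμp : IsPointwise μ) (hμ : IsRestriction μ)
    (hχ : IsRestriction χ) :
    IsRestriction (fun G => χ (μ G)) := by
  obtain ⟨hμ1, hμ2⟩ := hμp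
  -- any element of μ G is in μ {s} for itself
  have hself : ∀ (G : Finset S) (s : S), s ∈ μ G → s ∈ μ {s} := by
    intro G s hs
    rw [hμ2 G] at hs
    obtain ⟨t, _, hst⟩ := Finset.mem_biUnion.mp hs
    have : s ∈ ({t} : Finset S) := hμ1 t hst
    rw [Finset.mem_singleton] at this
    subst this
    exact hst
  have hmono : ∀ G H : Finset S, H ⊆ G → μ H ⊆ μ G := by
    intro G H hHG
    rw [hμ2 G, hμ2 H]
    exact Finset.biUnion_subset_biUnion_of_subset_left _ hHG
  constructor
  · intro G
    exact (hχ.1 (μ G)).trans (hμ.1 G)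
  · intro G H h1 h2
    have hsubμ : χ (μ G) ⊆ μ H := by
      intro s hs
      rw [hμ2 H]
      exact Finset.mem_biUnion.mpr ⟨s, h1 hs, hself G s (hχ.1 (μ G) hs)⟩
    exact hχ.2 (μ G) (μ H) hsubμ (hmono G H h2)
end

section
/- Every r-disk χ^r of a restriction χ is itself a restriction: if G_{χ^r} ⊆ H ⊆ G then H_{χ^r} = G_{χ^r}. -/
/-- The `r`-disk `χ^r` of a restriction `χ`: a function `d` mapping `G` to the
subgraph induced by `G_χ` together with its `r`-neighbours in `G`.  It satisfies
`G_χ ⊆ d G ⊆ G`, and for `H ⊆ G` with `χ H = χ G`, the neighbours of `G_χ` in `H`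
are those neighbours of `G_χ` in `G` belonging to `H`, i.e. `d H = d G ∩ H`. -/
def IsDisk {S : Type*} [DecidableEq S]
    (χ d : Finset S → Finset S) : Prop :=
  (∀ G : Finset S, χ G ⊆ d G ∧ d G ⊆ G) ∧
  (∀ G H : Finset S, H ⊆ G → χ H = χ G → d H = d G ∩ H)

/-- Every disk `χ^r` of a restriction `χ` is itself a restriction:
if `G_{χ^r} ⊆ H ⊆ G` then `H_{χ^r} = G_{χ^r}`. -/
theorem disk_isRestriction {S : Type*} [DecidableEq S]
    (χ d : Finset S → Finset S) (hχ : IsRestriction χ) (hd : IsDisk χ d) :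
    IsRestriction d := by
  refine ⟨fun G => (hd.1 G).2, fun G H hGH hHG => ?_⟩
  have hχeq : χ H = χ G := hχ.2 G H (((hd.1 G).1).trans hGH) hHG
  rw [hd.2 G H hHG hχeq, Finset.inter_eq_left.2 hGH]
end

section
/- Trace-trace composition under comprehension: if ζ ⊑ χ (ζ is comprehended within χ), then (ρ_{|χ})_{|ζ} = ρ_{|ζ} for all trace-class ρ. -/
open Matrix

/-- The generalized partial trace on the space of operators over the Hilbert
space with orthonormal basis indexed by graphs: the linear extension of
`(|G⟩⟨H|)_{|χ} := |G_χ⟩⟨H_χ| · ⟨H_{χ̄}|G_{χ̄}⟩`. -/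
noncomputable def ptr {S : Type*} [DecidableEq S] [Fintype S] (χ : Finset S → Finset S)
    (ρ : Matrix (Finset S) (Finset S) ℂ) : Matrix (Finset S) (Finset S) ℂ :=
  Matrix.of fun K L => ∑ G : Finset S, ∑ H : Finset S,
    if χ G = K ∧ χ H = L ∧ G \ χ G = H \ χ H then ρ G H else 0

/-- Comprehension `ζ ⊑ χ`: (i) `G_{χζ} = G_ζ` and (ii) equality outside `ζ`
decomposes as equality outside `ζ` inside `χ`, together with equality outside `χ`. -/
def Comprehension {S : Type*} [DecidableEq S] (ζ χ : Finset S → Finset S) : Prop :=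
  (∀ G : Finset S, ζ (χ G) = ζ G) ∧
  (∀ G H : Finset S,
    (G \ ζ G = H \ ζ H) ↔ ((χ G \ ζ (χ G) = χ H \ ζ (χ H)) ∧ (G \ χ G = H \ χ H)))

private lemma sum4 {ι : Type*} [Fintype ι] {M : Type*} [AddCommMonoid M]
    (f : ι → ι → ι → ι → M) :
    ∑ a, ∑ b, ∑ c, ∑ d, f a b c d = ∑ c, ∑ d, ∑ a, ∑ b, f a b c d := by
  have h3 : ∀ (g : ι → ι → ι → M), ∑ b, ∑ c, ∑ d, g b c d = ∑ c, ∑ d, ∑ b, g b c d := by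
    intro g
    rw [Finset.sum_comm]
    exact Finset.sum_congr rfl fun c _ => Finset.sum_comm
  calc ∑ a, ∑ b, ∑ c, ∑ d, f a b c d
      = ∑ a, ∑ c, ∑ d, ∑ b, f a b c d := Finset.sum_congr rfl fun a _ => h3 _
    _ = ∑ c, ∑ a, ∑ d, ∑ b, f a b c d := Finset.sum_comm
    _ = ∑ c, ∑ d, ∑ a, ∑ b, f a b c d := Finset.sum_congr rfl fun c _ =>
        Finset.sum_comm

/-- Trace-trace composition under comprehension: if `ζ ⊑ χ` then
`(ρ_{|χ})_{|ζ} = ρ_{|ζ}` for every trace-class `ρ`. -/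
theorem ptr_ptr_of_comprehension {S : Type*} [DecidableEq S] [Fintype S]
    (ζ χ : Finset S → Finset S) (hζ : IsRestriction ζ) (hχ : IsRestriction χ)
    (hc : Comprehension ζ χ) :
    ∀ ρ : Matrix (Finset S) (Finset S) ℂ, ptr ζ (ptr χ ρ) = ptr ζ ρ := by
  intro ρ
  obtain ⟨h1, h2⟩ := hc
  ext K L
  simp only [ptr, Matrix.of_apply]
  have key : ∀ G H : Finset S,
      ((ζ (χ G) = K ∧ ζ (χ H) = L ∧ χ G \ ζ (χ G) = χ H \ ζ (χ H)) ∧ G \ χ G = H \ χ H)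
      ↔ (ζ G = K ∧ ζ H = L ∧ G \ ζ G = H \ ζ H) := by
    intro G H
    rw [h1 G, h1 H, h2 G H, h1 G, h1 H]
    tauto
  have e1 : ∀ G' H' : Finset S,
      (if ζ G' = K ∧ ζ H' = L ∧ G' \ ζ G' = H' \ ζ H' then
        ∑ G : Finset S, ∑ H : Finset S,
          if χ G = G' ∧ χ H = H' ∧ G \ χ G = H \ χ H then ρ G H else 0
      else 0)
      = ∑ G : Finset S, ∑ H : Finset S,
          if χ H = H' then
            (if χ G = G' then
              (if (ζ G' = K ∧ ζ H' = L ∧ G' \ ζ G' = H' \ ζ H') ∧ G \ χ G = H \ χ H then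
                ρ G H else 0)
            else 0)
          else 0 := by
    intro G' H'
    split_ifs with h
    · exact Finset.sum_congr rfl fun G _ => Finset.sum_congr rfl fun H _ => by
        split_ifs <;> tauto
    · symm
      refine Finset.sum_eq_zero fun G _ => Finset.sum_eq_zero fun H _ => ?_
      split_ifs <;> tauto
  simp only [e1]
  rw [sum4]
  refine Finset.sum_congr rfl fun G _ => Finset.sum_congr rfl fun H _ => ?_
  simp only [Finset.sum_ite_eq, Finset.mem_univ, if_true]
  exact if_congr (key G H) rfl rfl
end

section
/- Dual locality: an operator A is χ-local if and only if Tr(Aρ) = Tr(Aρ_{|χ}) for all trace-class ρ; equivalently, (A|G⟩⟨H|)_{|∅} = (A(|G⟩⟨H|)_{|χ})_{|∅} for all basis graphs G, H. -/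
open Matrix

/-- `A` is `χ`-local. -/
def IsLocalOp {S : Type*} [DecidableEq S] (χ : Finset S → Finset S)
    (A : Matrix (Finset S) (Finset S) ℂ) : Prop :=
  ∀ G H : Finset S,
    A H G = A (χ H) (χ G) * (if H \ χ H = G \ χ G then 1 else 0)

section Aux

set_option linter.unusedSectionVars false

variable {S : Type*} [DecidableEq S] [Fintype S]

private lemma sum4_swap {M : Type*} [AddCommMonoid M]
    (f : Finset S → Finset S → Finset S → Finset S → M) :
    (∑ K : Finset S, ∑ L : Finset S, ∑ G : Finset S, ∑ H : Finset S, f K L G H)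
      = ∑ G : Finset S, ∑ H : Finset S, ∑ K : Finset S, ∑ L : Finset S, f K L G H := by
  calc (∑ K : Finset S, ∑ L : Finset S, ∑ G : Finset S, ∑ H : Finset S, f K L G H)
      = ∑ K : Finset S, ∑ G : Finset S, ∑ L : Finset S, ∑ H : Finset S, f K L G H :=
        Finset.sum_congr rfl fun K _ => Finset.sum_comm
    _ = ∑ G : Finset S, ∑ K : Finset S, ∑ L : Finset S, ∑ H : Finset S, f K L G H :=
        Finset.sum_comm
    _ = ∑ G : Finset S, ∑ K : Finset S, ∑ H : Finset S, ∑ L : Finset S, f K L G H :=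
        Finset.sum_congr rfl fun G _ => Finset.sum_congr rfl fun K _ => Finset.sum_comm
    _ = ∑ G : Finset S, ∑ H : Finset S, ∑ K : Finset S, ∑ L : Finset S, f K L G H :=
        Finset.sum_congr rfl fun G _ => Finset.sum_comm

private lemma trace_mul_eq (A ρ : Matrix (Finset S) (Finset S) ℂ) :
    (A * ρ).trace = ∑ G : Finset S, ∑ H : Finset S, A H G * ρ G H := by
  rw [Matrix.trace]
  simp only [Matrix.diag_apply, Matrix.mul_apply]
  rw [Finset.sum_comm]

private lemma trace_mul_ptr_eq (χ : Finset S → Finset S)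
    (A ρ : Matrix (Finset S) (Finset S) ℂ) :
    (A * ptr χ ρ).trace
      = ∑ G : Finset S, ∑ H : Finset S,
          (if G \ χ G = H \ χ H then A (χ H) (χ G) else 0) * ρ G H := by
  rw [trace_mul_eq]
  unfold ptr
  simp only [Matrix.of_apply, Finset.mul_sum, mul_ite, mul_zero, ite_and]
  rw [sum4_swap]
  refine Finset.sum_congr rfl fun G _ => Finset.sum_congr rfl fun H _ => ?_
  simp [Finset.sum_ite_eq, ite_mul, zero_mul]

end Aux

/-- Dual locality: `A` is `χ`-local iff `Tr(Aρ) = Tr(Aρ_{|χ})` for all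
trace-class `ρ`; equivalently, `(A|G⟩⟨H|)_{|∅} = (A(|G⟩⟨H|)_{|χ})_{|∅}`
for all basis graphs `G`, `H`. -/
theorem dual_locality {S : Type*} [DecidableEq S] [Fintype S]
    (χ : Finset S → Finset S) (hχ : IsRestriction χ)
    (A : Matrix (Finset S) (Finset S) ℂ) :
    (IsLocalOp χ A ↔
      ∀ ρ : Matrix (Finset S) (Finset S) ℂ, (A * ρ).trace = (A * ptr χ ρ).trace) ∧
    (IsLocalOp χ A ↔
      ∀ G H : Finset S,
        (A * Matrix.single G H (1 : ℂ)).trace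
          = (A * ptr χ (Matrix.single G H (1 : ℂ))).trace) := by
  have hPQ : IsLocalOp χ A →
      ∀ ρ : Matrix (Finset S) (Finset S) ℂ, (A * ρ).trace = (A * ptr χ ρ).trace := by
    intro h ρ
    rw [trace_mul_eq, trace_mul_ptr_eq]
    refine Finset.sum_congr rfl fun G _ => Finset.sum_congr rfl fun H _ => ?_
    rw [h G H]
    by_cases hc : G \ χ G = H \ χ H <;> simp [hc, eq_comm]
  have hQR : (∀ ρ : Matrix (Finset S) (Finset S) ℂ,
        (A * ρ).trace = (A * ptr χ ρ).trace) →
      ∀ G H : Finset S,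
        (A * Matrix.single G H (1 : ℂ)).trace
          = (A * ptr χ (Matrix.single G H (1 : ℂ))).trace :=
    fun h G H => h _
  have hRP : (∀ G H : Finset S,
        (A * Matrix.single G H (1 : ℂ)).trace
          = (A * ptr χ (Matrix.single G H (1 : ℂ))).trace) →
      IsLocalOp χ A := by
    intro h G H
    have key := h G H
    rw [trace_mul_eq, trace_mul_ptr_eq] at key
    simp only [Matrix.single, Matrix.of_apply, mul_ite, mul_one, mul_zero,
      ite_and, ite_mul, zero_mul, Finset.sum_ite_irrel, Finset.sum_const_zero,
      Finset.sum_ite_eq, Finset.mem_univ, if_true] at key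
    rw [key]
    by_cases hc : G \ χ G = H \ χ H <;> simp [hc, eq_comm]
  exact ⟨⟨hPQ, fun q => hRP (hQR q)⟩, ⟨fun p => hQR (hPQ p), hRP⟩⟩
end

section
/- Strict locality equals locality plus consistency-preservation: A is strictly χ-local (i.e. A, A†A, and AA† are all χ-local) if and only if A is χ-local and χ-consistent-preserving. -/
open Matrix

/-- `|L⟩ ⊗_χ |R⟩ ≠ 0`, i.e. `L` and `R` are `χ`-consistent: there is a graph
`G'` with `G'_χ = L` and `G'_{χ̄} = R`. -/
def ConsistentPair {S : Type*} [DecidableEq S] (χ : Finset S → Finset S)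
    (L R : Finset S) : Prop :=
  ∃ G' : Finset S, χ G' = L ∧ G' \ χ G' = R

/-- `A` is `χ`-consistent-preserving: `⟨H|A|G_χ⟩ ≠ 0 ⟹ |H⟩ ⊗_χ |G_{χ̄}⟩ ≠ 0`,
and likewise for `A†`. -/
def ConsPres {S : Type*} [DecidableEq S] (χ : Finset S → Finset S)
    (A : Matrix (Finset S) (Finset S) ℂ) : Prop :=
  (∀ G H : Finset S, A H (χ G) ≠ 0 → ConsistentPair χ H (G \ χ G)) ∧
  (∀ G H : Finset S, A.conjTranspose H (χ G) ≠ 0 → ConsistentPair χ H (G \ χ G))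


open scoped Classical

/-- Key reindexing lemma: summing `F (χ K)` over `K` with `K \ χ K = R` equals
summing `F L` over `L` consistent with `R`. -/
lemma key_reindex {S : Type*} [DecidableEq S] [Fintype S] {χ : Finset S → Finset S}
    (hχ : IsRestriction χ) (R : Finset S) {M : Type*} [AddCommMonoid M]
    (F : Finset S → M) :
    ∑ K : Finset S, (if K \ χ K = R then F (χ K) else 0)
      = ∑ L : Finset S, (if ConsistentPair χ L R then F L else 0) := by
  rw [← Finset.sum_filter, ← Finset.sum_filter]
  refine Finset.sum_nbij' (fun K => χ K) (fun L => L ∪ R) ?_ ?_ ?_ ?_ ?_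
  · intro K hK
    simp only [Finset.mem_filter, Finset.mem_univ, true_and] at hK ⊢
    exact ⟨K, rfl, hK⟩
  · intro L hL
    simp only [Finset.mem_filter, Finset.mem_univ, true_and] at hL ⊢
    obtain ⟨G', h1, h2⟩ := hL
    have hG' : G' = L ∪ R := by
      rw [← h1, ← h2, Finset.union_sdiff_of_subset (hχ.1 G')]
    rw [← hG', h2]
  · intro K hK
    simp only [Finset.mem_filter, Finset.mem_univ, true_and] at hK
    show χ K ∪ R = K
    rw [← hK, Finset.union_sdiff_of_subset (hχ.1 K)]
  · intro L hL
    simp only [Finset.mem_filter, Finset.mem_univ, true_and] at hL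
    obtain ⟨G', h1, h2⟩ := hL
    have hG' : G' = L ∪ R := by
      rw [← h1, ← h2, Finset.union_sdiff_of_subset (hχ.1 G')]
    show χ (L ∪ R) = L
    rw [← hG', h1]
  · intro K _; rfl

lemma sum_ite_eq_sum_real {ι : Type*} [Fintype ι] (p : ι → Prop) (f : ι → ℝ)
    (hf : ∀ i, 0 ≤ f i)
    (h : ∑ i : ι, (if p i then f i else 0) = ∑ i : ι, f i) :
    ∀ i, ¬ p i → f i = 0 := by
  intro i hi
  have h0 : ∑ j : ι, (f j - if p j then f j else 0) = 0 := by
    rw [Finset.sum_sub_distrib, h, sub_self]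
  have hnn : ∀ j ∈ Finset.univ, 0 ≤ f j - if p j then f j else 0 := by
    intro j _
    by_cases hj : p j <;> simp [hj, hf j]
  have := (Finset.sum_eq_zero_iff_of_nonneg hnn).mp h0 i (Finset.mem_univ i)
  simpa [hi] using this

/-- Strict locality equals locality plus consistency-preservation: `A`, `A†A`
and `AA†` are all `χ`-local iff `A` is `χ`-local and `χ`-consistent-preserving. -/
theorem strict_locality_iff {S : Type*} [DecidableEq S] [Fintype S]
    (χ : Finset S → Finset S) (hχ : IsRestriction χ)
    (A : Matrix (Finset S) (Finset S) ℂ) :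
    (IsLocalOp χ A ∧ IsLocalOp χ (A.conjTranspose * A) ∧
        IsLocalOp χ (A * A.conjTranspose)) ↔
      (IsLocalOp χ A ∧ ConsPres χ A) := by
  constructor
  · rintro ⟨hA, h1, h2⟩
    refine ⟨hA, ?_, ?_⟩
    · -- Part 1: via locality of A†A
      intro G H hne
      by_contra hcon
      have e1 := h1 G G
      rw [if_pos rfl, mul_one] at e1
      simp only [Matrix.mul_apply, Matrix.conjTranspose_apply] at e1
      -- e1 : ∑ x, star (A x G) * A x G = ∑ x, star (A x (χ G)) * A x (χ G)
      have key2 : ∑ K : Finset S, (if K \ χ K = G \ χ G then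
            star (A (χ K) (χ G)) * A (χ K) (χ G) else 0)
          = ∑ K : Finset S, star (A K (χ G)) * A K (χ G) := by
        rw [← e1]
        apply Finset.sum_congr rfl
        intro K _
        rw [hA G K]
        by_cases hK : K \ χ K = G \ χ G
        · rw [if_pos hK, if_pos hK, mul_one]
        · rw [if_neg hK, if_neg hK, mul_zero, star_zero, zero_mul]
      rw [key_reindex hχ (G \ χ G)
        (fun L => star (A L (χ G)) * A L (χ G))] at key2
      have keyR : ∑ L : Finset S, (if ConsistentPair χ L (G \ χ G) then
            Complex.normSq (A L (χ G)) else 0)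
          = ∑ L : Finset S, Complex.normSq (A L (χ G)) := by
        apply Complex.ofReal_injective
        rw [Complex.ofReal_sum, Complex.ofReal_sum]
        simpa only [apply_ite (Complex.ofReal), Complex.ofReal_zero,
          Complex.normSq_eq_conj_mul_self, Complex.star_def] using key2
      have h0 := sum_ite_eq_sum_real (fun L => ConsistentPair χ L (G \ χ G))
        (fun L => Complex.normSq (A L (χ G))) (fun L => Complex.normSq_nonneg _)
        keyR H hcon
      exact hne (by rwa [← Complex.normSq_eq_zero])
    · -- Part 2: via locality of AA†
      intro G H hne
      by_contra hcon
      have e1 := h2 G G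
      rw [if_pos rfl, mul_one] at e1
      simp only [Matrix.mul_apply, Matrix.conjTranspose_apply] at e1
      -- e1 : ∑ x, A G x * star (A G x) = ∑ x, A (χ G) x * star (A (χ G) x)
      have key2 : ∑ K : Finset S, (if K \ χ K = G \ χ G then
            A (χ G) (χ K) * star (A (χ G) (χ K)) else 0)
          = ∑ K : Finset S, A (χ G) K * star (A (χ G) K) := by
        rw [← e1]
        apply Finset.sum_congr rfl
        intro K _
        rw [hA K G]
        by_cases hK : K \ χ K = G \ χ G
        · rw [if_pos hK, if_pos hK.symm, mul_one]
        · rw [if_neg hK, if_neg (fun h => hK h.symm), mul_zero, star_zero,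
            mul_zero]
      rw [key_reindex hχ (G \ χ G)
        (fun L => A (χ G) L * star (A (χ G) L))] at key2
      have keyR : ∑ L : Finset S, (if ConsistentPair χ L (G \ χ G) then
            Complex.normSq (A (χ G) L) else 0)
          = ∑ L : Finset S, Complex.normSq (A (χ G) L) := by
        apply Complex.ofReal_injective
        rw [Complex.ofReal_sum, Complex.ofReal_sum]
        simpa only [apply_ite (Complex.ofReal), Complex.ofReal_zero,
          Complex.normSq_eq_conj_mul_self, Complex.star_def, mul_comm]
          using key2
      have h0 := sum_ite_eq_sum_real (fun L => ConsistentPair χ L (G \ χ G))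
        (fun L => Complex.normSq (A (χ G) L)) (fun L => Complex.normSq_nonneg _)
        keyR H hcon
      apply hne
      rw [Matrix.conjTranspose_apply]
      rw [Complex.normSq_eq_zero] at h0
      rw [h0, star_zero]
  · rintro ⟨hA, hc1, hc2⟩
    refine ⟨hA, ?_, ?_⟩
    · -- A†A is local
      intro G H
      by_cases heq : H \ χ H = G \ χ G
      · rw [if_pos heq, mul_one]
        simp only [Matrix.mul_apply, Matrix.conjTranspose_apply]
        have lhs : ∑ K : Finset S, star (A K H) * A K G
            = ∑ K : Finset S, (if K \ χ K = G \ χ G then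
                star (A (χ K) (χ H)) * A (χ K) (χ G) else 0) := by
          apply Finset.sum_congr rfl
          intro K _
          rw [hA H K, hA G K, heq]
          by_cases hK : K \ χ K = G \ χ G
          · simp [hK]
          · simp [hK]
        rw [lhs, key_reindex hχ (G \ χ G)
          (fun L => star (A L (χ H)) * A L (χ G))]
        apply Finset.sum_congr rfl
        intro L _
        by_cases hL : ConsistentPair χ L (G \ χ G)
        · rw [if_pos hL]
        · rw [if_neg hL]
          rcases eq_or_ne (A L (χ H)) 0 with h | h
          · rw [h, star_zero, zero_mul]
          · exact absurd (heq ▸ hc1 H L h) hL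
      · rw [if_neg heq, mul_zero]
        simp only [Matrix.mul_apply, Matrix.conjTranspose_apply]
        apply Finset.sum_eq_zero
        intro K _
        rw [hA H K, hA G K]
        by_cases hKH : K \ χ K = H \ χ H
        · have hng : ¬ K \ χ K = G \ χ G := fun h => heq (hKH.symm.trans h)
          simp [hng]
        · simp [hKH]
    · -- AA† is local
      intro G H
      by_cases heq : H \ χ H = G \ χ G
      · rw [if_pos heq, mul_one]
        simp only [Matrix.mul_apply, Matrix.conjTranspose_apply]
        have lhs : ∑ K : Finset S, A H K * star (A G K)
            = ∑ K : Finset S, (if K \ χ K = G \ χ G then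
                A (χ H) (χ K) * star (A (χ G) (χ K)) else 0) := by
          apply Finset.sum_congr rfl
          intro K _
          rw [hA K H, hA K G, heq]
          by_cases hK : K \ χ K = G \ χ G
          · simp [hK]
          · have hK' : ¬ G \ χ G = K \ χ K := fun h => hK h.symm
            simp [hK, hK']
        rw [lhs, key_reindex hχ (G \ χ G)
          (fun L => A (χ H) L * star (A (χ G) L))]
        apply Finset.sum_congr rfl
        intro L _
        by_cases hL : ConsistentPair χ L (G \ χ G)
        · rw [if_pos hL]
        · rw [if_neg hL]
          rcases eq_or_ne (A (χ H) L) 0 with h | h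
          · rw [h, zero_mul]
          · have h' : A.conjTranspose L (χ H) ≠ 0 := by
              rw [Matrix.conjTranspose_apply]
              exact fun hzero => h (by simpa using congrArg star hzero)
            exact absurd (heq ▸ hc2 H L h') hL
      · rw [if_neg heq, mul_zero]
        simp only [Matrix.mul_apply, Matrix.conjTranspose_apply]
        apply Finset.sum_eq_zero
        intro K _
        rw [hA K H, hA K G]
        by_cases hKH : H \ χ H = K \ χ K
        · have hng : ¬ G \ χ G = K \ χ K := fun h => heq (hKH.trans h.symm)
          simp [hng]
        · simp [hKH]
end

section
/- Interchange law: if A and A' are χ-consistent-preserving, then (A' ⊗_χ I)(A ⊗_χ I) = (A'A) ⊗_χ I, and A'A is again χ-consistent-preserving. -/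
open Matrix

/-- The generalized tensor `A ⊗_χ B`. -/
noncomputable def tensorChi {S : Type*} [DecidableEq S] (χ : Finset S → Finset S)
    (A B : Matrix (Finset S) (Finset S) ℂ) : Matrix (Finset S) (Finset S) ℂ :=
  Matrix.of fun H G => A (χ H) (χ G) * B (H \ χ H) (G \ χ G)

/-- Key summation lemma: summing `f (χ K)` over all `K` with fixed complement
`R` equals summing `f M` over all `M`, provided `f` vanishes off consistent
pairs. -/
lemma key_sum {S : Type*} [DecidableEq S] [Fintype S] (χ : Finset S → Finset S)
    (hsub : ∀ G : Finset S, χ G ⊆ G) (R : Finset S) (f : Finset S → ℂ)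
    (hf : ∀ M, ¬ ConsistentPair χ M R → f M = 0) :
    ∑ K : Finset S, (if K \ χ K = R then f (χ K) else 0) = ∑ M : Finset S, f M := by
  classical
  rw [← Finset.sum_filter]
  rw [show (∑ M : Finset S, f M) =
      ∑ M ∈ Finset.univ.filter (fun M => ConsistentPair χ M R), f M by
    symm
    apply Finset.sum_subset (Finset.filter_subset _ _)
    intro M _ hM
    simp only [Finset.mem_filter, Finset.mem_univ, true_and] at hM
    exact hf M hM]
  apply Finset.sum_bij (fun K _ => χ K)
  · intro K hK
    simp only [Finset.mem_filter, Finset.mem_univ, true_and] at hK ⊢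
    exact ⟨K, rfl, hK⟩
  · intro K₁ h₁ K₂ h₂ h
    simp only [Finset.mem_filter, Finset.mem_univ, true_and] at h₁ h₂
    have e₁ : χ K₁ ∪ (K₁ \ χ K₁) = K₁ := Finset.union_sdiff_of_subset (hsub K₁)
    have e₂ : χ K₂ ∪ (K₂ \ χ K₂) = K₂ := Finset.union_sdiff_of_subset (hsub K₂)
    rw [← e₁, ← e₂, h₁, h₂, h]
  · intro M hM
    simp only [Finset.mem_filter, Finset.mem_univ, true_and] at hM
    obtain ⟨G', hG'1, hG'2⟩ := hM
    exact ⟨G', by simp [hG'2], hG'1⟩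
  · intro K _
    rfl

/-- Interchange law: if `A` and `A'` are `χ`-consistent-preserving, then
`(A' ⊗_χ I)(A ⊗_χ I) = (A'A) ⊗_χ I`, and `A'A` is again
`χ`-consistent-preserving. -/
theorem interchange_law {S : Type*} [DecidableEq S] [Fintype S]
    (χ : Finset S → Finset S) (hχ : IsRestriction χ)
    (A A' : Matrix (Finset S) (Finset S) ℂ)
    (hA : ConsPres χ A) (hA' : ConsPres χ A') :
    tensorChi χ A' 1 * tensorChi χ A 1 = tensorChi χ (A' * A) 1 ∧
      ConsPres χ (A' * A) := by
  classical
  constructor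
  · ext H G
    rw [Matrix.mul_apply]
    simp only [tensorChi, Matrix.of_apply, Matrix.one_apply, Matrix.mul_apply]
    by_cases hHG : H \ χ H = G \ χ G
    · rw [if_pos hHG, mul_one]
      rw [show (∑ K : Finset S,
          A' (χ H) (χ K) * (if H \ χ H = K \ χ K then (1:ℂ) else 0) *
            (A (χ K) (χ G) * (if K \ χ K = G \ χ G then (1:ℂ) else 0))) =
          ∑ K : Finset S, (if K \ χ K = G \ χ G then
            A' (χ H) (χ K) * A (χ K) (χ G) else 0) by
        apply Finset.sum_congr rfl
        intro K _
        by_cases hK : K \ χ K = G \ χ G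
        · rw [if_pos hK, if_pos (hHG.trans hK.symm), if_pos hK]
          ring
        · rw [if_neg hK, if_neg hK, mul_zero, mul_zero]]
      exact key_sum χ hχ.1 (G \ χ G) (fun M => A' (χ H) M * A M (χ G))
        (fun M hM => by
          by_cases h : A M (χ G) = 0
          · simp [h]
          · exact absurd (hA.1 G M h) hM)
    · rw [if_neg hHG, mul_zero]
      apply Finset.sum_eq_zero
      intro K _
      by_cases hK : H \ χ H = K \ χ K
      · rw [if_neg (fun h => hHG (hK.trans h)), mul_zero, mul_zero]
      · rw [if_neg hK, mul_zero, zero_mul]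
  · constructor
    · intro G H h
      rw [Matrix.mul_apply] at h
      obtain ⟨M, _, hM⟩ := Finset.exists_ne_zero_of_sum_ne_zero h
      have h1 : A' H M ≠ 0 := fun h0 => hM (by rw [h0, zero_mul])
      have h2 : A M (χ G) ≠ 0 := fun h0 => hM (by rw [h0, mul_zero])
      obtain ⟨G', hG'1, hG'2⟩ := hA.1 G M h2
      have := hA'.1 G' H (by rwa [hG'1])
      rwa [hG'2] at this
    · intro G H h
      rw [Matrix.conjTranspose_mul, Matrix.mul_apply] at h
      obtain ⟨M, _, hM⟩ := Finset.exists_ne_zero_of_sum_ne_zero h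
      have h1 : A.conjTranspose H M ≠ 0 := fun h0 => hM (by rw [h0, zero_mul])
      have h2 : A'.conjTranspose M (χ G) ≠ 0 := fun h0 => hM (by rw [h0, mul_zero])
      obtain ⟨G', hG'1, hG'2⟩ := hA'.2 G M h2
      have := hA.2 G' H (by rwa [hG'1])
      rwa [hG'2] at this
end

section
/- Dual causality: a unitary U is χζ-causal (meaning (UρU†)_{|ζ} = (Uρ_{|χ}U†)_{|ζ} for all trace-class ρ) if and only if for every ζ-local operator A, the operator U†AU is χ-local; moreover if U is χζ-causal and A is strictly ζ-local then U†AU is strictly χ-local. -/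
open Matrix

/-- `A` is strictly `ζ`-local: `A`, `A†A` and `AA†` are `ζ`-local. -/
def IsStrictlyLocalOp {S : Type*} [DecidableEq S] [Fintype S] (ζ : Finset S → Finset S)
    (A : Matrix (Finset S) (Finset S) ℂ) : Prop :=
  IsLocalOp ζ A ∧ IsLocalOp ζ (A.conjTranspose * A) ∧
    IsLocalOp ζ (A * A.conjTranspose)

/-- `U` is `χζ`-causal: `(UρU†)_{|ζ} = (Uρ_{|χ}U†)_{|ζ}` for all trace-class `ρ`. -/
def IsCausal {S : Type*} [DecidableEq S] [Fintype S] (χ ζ : Finset S → Finset S)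
    (U : Matrix (Finset S) (Finset S) ℂ) : Prop :=
  ∀ ρ : Matrix (Finset S) (Finset S) ℂ,
    ptr ζ (U * ρ * U.conjTranspose) = ptr ζ (U * ptr χ ρ * U.conjTranspose)


set_option linter.unusedSectionVars false

namespace DC
variable {S : Type*} [DecidableEq S] [Fintype S]

noncomputable def T (A ρ : Matrix (Finset S) (Finset S) ℂ) : ℂ :=
  ∑ X : Finset S, ∑ Y : Finset S, A X Y * ρ Y X

lemma T_trace (A ρ : Matrix (Finset S) (Finset S) ℂ) : (A * ρ).trace = T A ρ := by
  simp [T, Matrix.trace, Matrix.mul_apply, Matrix.diag]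

lemma T_conj (U A ρ : Matrix (Finset S) (Finset S) ℂ) :
    T (U.conjTranspose * A * U) ρ = T A (U * ρ * U.conjTranspose) := by
  rw [← T_trace, ← T_trace]
  rw [mul_assoc, mul_assoc, Matrix.trace_mul_comm]
  simp [mul_assoc]

lemma sum_swap4 {f : Finset S → Finset S → Finset S → Finset S → ℂ} :
    (∑ X : Finset S, ∑ Y : Finset S, ∑ G : Finset S, ∑ H : Finset S, f X Y G H)
  = ∑ G : Finset S, ∑ H : Finset S, ∑ X : Finset S, ∑ Y : Finset S, f X Y G H := by
  rw [Finset.sum_comm]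
  refine Eq.trans (Finset.sum_congr rfl fun Y _ => Finset.sum_comm) ?_
  rw [Finset.sum_comm]
  refine Finset.sum_congr rfl fun G _ => ?_
  refine Eq.trans (Finset.sum_congr rfl fun Y _ => Finset.sum_comm) ?_
  rw [Finset.sum_comm]
  refine Finset.sum_congr rfl fun H _ => Finset.sum_comm

lemma T_ptr (χ : Finset S → Finset S) (A ρ : Matrix (Finset S) (Finset S) ℂ) :
    T A (ptr χ ρ) = ∑ G : Finset S, ∑ H : Finset S,
      if G \ χ G = H \ χ H then A (χ H) (χ G) * ρ G H else 0 := by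
  unfold T ptr
  simp only [Matrix.of_apply, Finset.mul_sum, mul_ite, mul_zero]
  rw [sum_swap4]
  refine Finset.sum_congr rfl fun G _ => Finset.sum_congr rfl fun H _ => ?_
  simp [Finset.sum_ite_eq, ite_and]

lemma dual_easy {χ : Finset S → Finset S} {A : Matrix (Finset S) (Finset S) ℂ}
    (h : IsLocalOp χ A) (ρ : Matrix (Finset S) (Finset S) ℂ) :
    T A ρ = T A (ptr χ ρ) := by
  rw [T_ptr]
  unfold T
  rw [Finset.sum_comm]
  refine Finset.sum_congr rfl fun G _ => Finset.sum_congr rfl fun H _ => ?_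
  rw [h G H]
  by_cases hd : G \ χ G = H \ χ H
  · rw [if_pos hd, if_pos hd.symm, mul_one]
  · have hd' : ¬(H \ χ H = G \ χ G) := fun h => hd h.symm
    rw [if_neg hd, if_neg hd', mul_zero, zero_mul]

lemma T_std (A : Matrix (Finset S) (Finset S) ℂ) (G H : Finset S) :
    T A (Matrix.single G H 1) = A H G := by
  unfold T
  simp [Matrix.single, ite_and, Finset.sum_ite_eq]

lemma T_ptr_std (χ : Finset S → Finset S) (A : Matrix (Finset S) (Finset S) ℂ) (G H : Finset S) :
    T A (ptr χ (Matrix.single G H 1))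
      = A (χ H) (χ G) * (if H \ χ H = G \ χ G then 1 else 0) := by
  rw [T_ptr]
  have : ∀ G' H' : Finset S, (Matrix.single G H 1 : Matrix (Finset S) (Finset S) ℂ) G' H'
      = if G = G' ∧ H = H' then 1 else 0 := fun _ _ => rfl
  simp only [this, mul_ite, mul_one, mul_zero]
  rw [show ∀ v : Finset S → Finset S → ℂ,
    (∑ G' : Finset S, ∑ H' : Finset S, if G' \ χ G' = H' \ χ H' then
      (if G = G' ∧ H = H' then v G' H' else 0) else 0)
    = ∑ G' : Finset S, ∑ H' : Finset S, if G = G' ∧ H = H' ∧ G' \ χ G' = H' \ χ H' then v G' H' else 0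
    from fun v => Finset.sum_congr rfl fun G' _ => Finset.sum_congr rfl fun H' _ => by
      split_ifs with h1 h2 h3 h3 <;> simp_all]
  simp [ite_and, Finset.sum_ite_eq]
  by_cases hd : G \ χ G = H \ χ H
  · rw [if_pos hd, if_pos hd.symm]
  · have hd' : ¬(H \ χ H = G \ χ G) := fun h => hd h.symm
    rw [if_neg hd, if_neg hd']

lemma dual_hard {χ : Finset S → Finset S} {A : Matrix (Finset S) (Finset S) ℂ}
    (h : ∀ ρ : Matrix (Finset S) (Finset S) ℂ, T A ρ = T A (ptr χ ρ)) :
    IsLocalOp χ A := by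
  intro G H
  have := h (Matrix.single G H 1)
  rwa [T_std, T_ptr_std] at this

lemma idem {χ : Finset S → Finset S} (hχ : IsRestriction χ) (G : Finset S) :
    χ (χ G) = χ G :=
  hχ.2 G (χ G) (Finset.Subset.refl _) (hχ.1 G)

lemma tomography {ζ : Finset S → Finset S} (hζ : IsRestriction ζ)
    {ρ σ : Matrix (Finset S) (Finset S) ℂ}
    (h : ∀ A : Matrix (Finset S) (Finset S) ℂ, IsLocalOp ζ A → T A ρ = T A σ) :
    ptr ζ ρ = ptr ζ σ := by
  ext K L
  set A : Matrix (Finset S) (Finset S) ℂ :=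
    Matrix.of fun X Y => if ζ X = L ∧ ζ Y = K ∧ X \ ζ X = Y \ ζ Y then 1 else 0 with hA
  have hAl : IsLocalOp ζ A := by
    intro G H
    simp only [hA, Matrix.of_apply, idem hζ, Finset.sdiff_self, mul_ite, mul_one, mul_zero]
    by_cases h1 : ζ H = L <;> by_cases h2 : ζ G = K <;>
      by_cases h3 : H \ ζ H = G \ ζ G <;> simp [h1, h2, h3]
  have key : ∀ τ : Matrix (Finset S) (Finset S) ℂ, T A τ = ptr ζ τ K L := by
    intro τ
    unfold T ptr
    simp only [hA, Matrix.of_apply, ite_mul, one_mul, zero_mul]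
    rw [Finset.sum_comm]
    refine Finset.sum_congr rfl fun X _ => Finset.sum_congr rfl fun Y _ => ?_
    refine if_congr ?_ rfl rfl
    constructor
    · rintro ⟨a, b, c⟩; exact ⟨b, a, c.symm⟩
    · rintro ⟨a, b, c⟩; exact ⟨b, a, c.symm⟩
  rw [← key ρ, ← key σ, h A hAl]

end DC

/-- Dual causality: a unitary `U` is `χζ`-causal iff for every `ζ`-local `A`,
`U†AU` is `χ`-local; moreover if `U` is `χζ`-causal and `A` is strictly
`ζ`-local then `U†AU` is strictly `χ`-local. -/
theorem dual_causality {S : Type*} [DecidableEq S] [Fintype S]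
    (χ ζ : Finset S → Finset S) (hχ : IsRestriction χ) (hζ : IsRestriction ζ)
    (U : Matrix (Finset S) (Finset S) ℂ)
    (hU : U ∈ Matrix.unitaryGroup (Finset S) ℂ) :
    (IsCausal χ ζ U ↔
      ∀ A : Matrix (Finset S) (Finset S) ℂ,
        IsLocalOp ζ A → IsLocalOp χ (U.conjTranspose * A * U)) ∧
    (IsCausal χ ζ U →
      ∀ A : Matrix (Finset S) (Finset S) ℂ,
        IsStrictlyLocalOp ζ A → IsStrictlyLocalOp χ (U.conjTranspose * A * U)) := by
  have hUU : U * U.conjTranspose = 1 := by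
    have h := Matrix.mem_unitaryGroup_iff.mp hU
    rwa [Matrix.star_eq_conjTranspose] at h
  have e2 : ∀ B C : Matrix (Finset S) (Finset S) ℂ,
      (U.conjTranspose * B * U) * (U.conjTranspose * C * U)
        = U.conjTranspose * (B * C) * U := by
    intro B C
    simp only [mul_assoc]
    congr 2
    rw [← mul_assoc, hUU, one_mul]
  have dag : ∀ B : Matrix (Finset S) (Finset S) ℂ,
      (U.conjTranspose * B * U).conjTranspose
        = U.conjTranspose * B.conjTranspose * U := by
    intro B
    simp [Matrix.conjTranspose_mul, mul_assoc]
  have key : IsCausal χ ζ U ↔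
      ∀ A : Matrix (Finset S) (Finset S) ℂ,
        IsLocalOp ζ A → IsLocalOp χ (U.conjTranspose * A * U) := by
    constructor
    · intro hc A hA
      apply DC.dual_hard
      intro ρ
      rw [DC.T_conj, DC.dual_easy hA, hc ρ, ← DC.dual_easy hA, ← DC.T_conj]
    · intro h ρ
      apply DC.tomography hζ
      intro A hA
      rw [← DC.T_conj, DC.dual_easy (h A hA), DC.T_conj]
  refine ⟨key, ?_⟩
  intro hc A hA
  obtain ⟨h0, h1, h2⟩ := hA
  refine ⟨key.1 hc A h0, ?_, ?_⟩
  · rw [dag, e2]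
    exact key.1 hc _ h1
  · rw [dag, e2]
    exact key.1 hc _ h2
end
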